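/- Let X be an inner product module over a C*-algebra A, e ∈ X with ⟨e,e⟩ idempotent. Then for all x,y ∈ X and a,b,c,d ∈ A: |⟨x,y⟩ − ⟨x,e⟩⟨e,y⟩|² ≤ ‖x − e((a+b)/2)‖² · |y − e((c+d)/2)|², where for z ∈ X, |z| := ⟨z,z⟩^{1/2} ∈ A and ‖z‖ := ‖⟨z,z⟩‖^{1/2}. -/

import Mathlib

/-- `|⟨x,y⟩ − ⟨x,e⟩⟨e,y⟩|² ≤ ‖x − e((a+b)/2)‖² · |y − e((c+d)/2)|²`,
where `|z|² = ⟨z,z⟩` for `z ∈ X`, `|c|² = c*c` for `c ∈ A`, `‖z‖² = ‖⟨z,z⟩‖`. -/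
theorem stmt4 {A X : Type*} [CStarAlgebra A] [PartialOrder A] [StarOrderedRing A]
    [AddCommGroup X]
    (inner : X → X → A) (smul : X → A → X)
    (h_add : ∀ x y z : X, inner x (y + z) = inner x y + inner x z)
    (h_smul : ∀ (x y : X) (a : A), inner x (smul y a) = inner x y * a)
    (h_star : ∀ x y : X, star (inner x y) = inner y x)
    (h_pos : ∀ x : X, 0 ≤ inner x x)
    (h_nondeg : ∀ x : X, inner x x = 0 → x = 0)
    (e : X) (h_idem : inner e e * inner e e = inner e e)
    (x y : X) (a b c d : A) :
    star (inner x y - inner x e * inner e y) * (inner x y - inner x e * inner e y) ≤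
      ‖inner (x - smul e ((2⁻¹ : ℂ) • (a + b))) (x - smul e ((2⁻¹ : ℂ) • (a + b)))‖ •
        inner (y - smul e ((2⁻¹ : ℂ) • (c + d))) (y - smul e ((2⁻¹ : ℂ) • (c + d))) := by
  -- basic derived properties of the inner product
  have hzero : ∀ z : X, inner z 0 = 0 := fun z => by
    have h := h_add z 0 0
    rw [add_zero] at h
    exact (left_eq_add.mp h)
  have hzero' : ∀ z : X, inner 0 z = 0 := fun z => by
    rw [← h_star z 0, hzero, star_zero]
  have hneg : ∀ z w : X, inner z (-w) = -inner z w := fun z w => by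
    have h := (h_add z w (-w)).symm
    rw [add_neg_cancel, hzero, add_comm] at h
    exact eq_neg_of_add_eq_zero_left h
  have hsub : ∀ z w₁ w₂ : X, inner z (w₁ - w₂) = inner z w₁ - inner z w₂ := fun z w₁ w₂ => by
    rw [sub_eq_add_neg, h_add, hneg, sub_eq_add_neg]
  have hsub' : ∀ z₁ z₂ w : X, inner (z₁ - z₂) w = inner z₁ w - inner z₂ w := fun z₁ z₂ w => by
    rw [← h_star, hsub, star_sub, h_star, h_star]
  have hsmul' : ∀ (z w : X) (r : A), inner (smul z r) w = star r * inner z w := fun z w r => by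
    rw [← h_star, h_smul, star_mul, h_star]
  -- general bilinear expansions
  have hbil2 : ∀ (x₁ x₂ e₂ : X) (r₂ : A),
      inner x₁ (x₂ - smul e₂ r₂) = inner x₁ x₂ - inner x₁ e₂ * r₂ := fun x₁ x₂ e₂ r₂ => by
    rw [hsub, h_smul]
  have hbil1 : ∀ (x₁ e₁ : X) (r₁ : A) (x₂ : X),
      inner (x₁ - smul e₁ r₁) x₂ = inner x₁ x₂ - star r₁ * inner e₁ x₂ := fun x₁ e₁ r₁ x₂ => by
    rw [hsub', hsmul']
  have hbil : ∀ (x₁ e₁ : X) (r₁ : A) (x₂ e₂ : X) (r₂ : A),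
      inner (x₁ - smul e₁ r₁) (x₂ - smul e₂ r₂)
        = inner x₁ x₂ - inner x₁ e₂ * r₂ - star r₁ * inner e₁ x₂
            + star r₁ * (inner e₁ e₂ * r₂) := fun x₁ e₁ r₁ x₂ e₂ r₂ => by
    rw [hbil1, hbil2, hbil2, mul_sub]
    abel
  -- the projection p = ⟨e,e⟩ and the identity e = e·p
  have hp_star : star (inner e e) = inner e e := h_star e e
  have he : smul e (inner e e) = e := by
    have h0 : inner (e - smul e (inner e e)) (e - smul e (inner e e)) = 0 := by
      rw [hbil, hp_star]
      simp only [h_idem]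
      abel
    have h1 := h_nondeg _ h0
    rw [sub_eq_zero] at h1
    exact h1.symm
  have hproj1 : ∀ z : X, inner z e * inner e e = inner z e := fun z => by
    have h := h_smul z e (inner e e)
    rw [he] at h
    exact h.symm
  have hproj2 : ∀ z : X, inner e e * inner e z = inner e z := fun z => by
    have h := congrArg star (hproj1 z)
    rwa [star_mul, hp_star, h_star] at h
  -- abbreviations as opaque atoms
  obtain ⟨α, hα⟩ : ∃ α : A, α = (2⁻¹ : ℂ) • (a + b) := ⟨_, rfl⟩
  obtain ⟨β, hβ⟩ : ∃ β : A, β = (2⁻¹ : ℂ) • (c + d) := ⟨_, rfl⟩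
  obtain ⟨u, hu⟩ : ∃ u : X, u = x - smul e α := ⟨_, rfl⟩
  obtain ⟨v, hv⟩ : ∃ v : X, v = y - smul e β := ⟨_, rfl⟩
  rw [← hα, ← hβ, ← hu, ← hv]
  obtain ⟨w, hw⟩ : ∃ w : X, w = v - smul e (inner e v) := ⟨_, rfl⟩
  -- key identity 1 : ⟨u,w⟩ = ⟨x,y⟩ - ⟨x,e⟩⟨e,y⟩
  have key1 : inner u w = inner x y - inner x e * inner e y := by
    rw [hw, hbil2 u v e (inner e v)]
    rw [hu, hv, hbil x e α y e β, hbil1 x e α e, hbil2 e y e β]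
    rw [sub_mul, mul_sub, mul_sub]
    rw [← mul_assoc (inner x e) (inner e e) β, hproj1 x]
    rw [mul_assoc (star α) (inner e e) (inner e y), hproj2 y]
    rw [mul_assoc (star α) (inner e e) (inner e e * β), ← mul_assoc (inner e e) (inner e e) β,
      h_idem]
    abel
  -- key identity 2 : ⟨w,w⟩ = ⟨v,v⟩ - ⟨v,e⟩⟨e,v⟩
  have key2 : inner w w = inner v v - inner v e * inner e v := by
    rw [hw, hbil v e (inner e v) v e (inner e v), h_star e v, hproj2 v]
    abel
  have hwv : inner w w ≤ inner v v := by
    rw [key2]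
    refine sub_le_self _ ?_
    rw [← h_star e v]
    exact star_mul_self_nonneg _
  -- reduce the goal
  rw [← key1, h_star u w]
  -- Cauchy–Schwarz
  by_cases hn0 : inner u u = 0
  · have hu0 : u = 0 := h_nondeg _ hn0
    rw [hu0, hzero', hzero', mul_zero]
    exact smul_nonneg (norm_nonneg _) (h_pos v)
  · obtain ⟨n, hn⟩ : ∃ n : ℝ, n = ‖inner u u‖ := ⟨_, rfl⟩
    rw [← hn]
    have hnpos : 0 < n := hn ▸ norm_pos_iff.mpr hn0
    obtain ⟨M, hM⟩ : ∃ M : A, M = inner w u * inner u w := ⟨_, rfl⟩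
    obtain ⟨t, ht⟩ : ∃ t : A, t = (n⁻¹ : ℝ) • inner u w := ⟨_, rfl⟩
    have hstart : star t = (n⁻¹ : ℝ) • inner w u := by
      rw [ht, star_smul, star_trivial, h_star]
    have e1 : inner w u * t = (n⁻¹ : ℝ) • M := by
      rw [ht, mul_smul_comm, hM]
    have e2 : star t * inner u w = (n⁻¹ : ℝ) • M := by
      rw [hstart, smul_mul_assoc, hM]
    have hbound : star t * (inner u u * t) ≤ (n⁻¹ : ℝ) • M := by
      have h1 : inner u u ≤ algebraMap ℝ A n := by
        have hsa : IsSelfAdjoint (inner u u) := h_star u u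
        simpa [← hn] using hsa.le_algebraMap_norm_self
      have h2 := star_left_conjugate_le_conjugate h1 t
      have h3 : star t * algebraMap ℝ A n * t = (n⁻¹ : ℝ) • M := by
        rw [Algebra.algebraMap_eq_smul_one, mul_smul_comm, mul_one, smul_mul_assoc, hstart,
          smul_mul_assoc, e1, smul_smul, smul_smul]
        congr 1
        field_simp
      rw [h3, mul_assoc] at h2
      exact h2
    have h0 : (0:A) ≤ inner (w - smul u t) (w - smul u t) := h_pos _
    rw [hbil w u t w u t, e1, e2] at h0
    have hq : (0:A) ≤ inner w w - (n⁻¹ : ℝ) • M := by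
      refine h0.trans ?_
      calc inner w w - (n⁻¹:ℝ) • M - (n⁻¹:ℝ) • M + star t * (inner u u * t)
          ≤ inner w w - (n⁻¹:ℝ) • M - (n⁻¹:ℝ) • M + (n⁻¹:ℝ) • M := add_le_add_right hbound _
        _ = inner w w - (n⁻¹:ℝ) • M := by abel
    have hCS : M ≤ n • inner w w := by
      have hq2 : (0:A) ≤ n • (inner w w - (n⁻¹ : ℝ) • M) := smul_nonneg hnpos.le hq
      rwa [smul_sub, smul_smul, mul_inv_cancel₀ hnpos.ne', one_smul, sub_nonneg] at hq2
    have hmono : n • inner w w ≤ n • inner v v := by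
      have h4 : (0:A) ≤ n • (inner v v - inner w w) :=
        smul_nonneg hnpos.le (by rwa [sub_nonneg])
      rw [smul_sub, sub_nonneg] at h4
      exact h4
    rw [← hM]
    exact hCS.trans hmono
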